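/- arXiv:2401.03422 — 3 statements merged into one kernel-verified Lean document; each statement's English description precedes it below -/
import Mathlib

section
/- If ξ and η are real-number generators (i.e. R(ξ) and R(η) hold), then their product, defined by (ξ·η)(x) = ⌊ξ(x)·η(x) / 2^x⌋ (the floor of 2^{-x}·ξ(x)·η(x), i.e. natural-number division of ξ(x)·η(x) by 2^x), is also a real-number generator: R(ξ·η) holds. -/
set_option maxHeartbeats 1000000


/-- `ξ : ℕ → ℕ` is a real-number generator: the sequence of dyadic fractions
`2^{-x} * ξ x` is a Cauchy sequence in the explicit sense. -/
def IsGen (ξ : ℕ → ℕ) : Prop :=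
  ∀ k : ℕ, ∃ x : ℕ, ∀ p : ℕ,
    2 ^ k * ((2 ^ p * (ξ x : ℤ) - (ξ (x + p) : ℤ)).natAbs) < 2 ^ (x + p)

/-- Equality of generators: `ξ ≐ η`. -/
def genEq (ξ η : ℕ → ℕ) : Prop :=
  ∀ k : ℕ, ∃ x : ℕ, ∀ p : ℕ,
    2 ^ k * (((ξ (x + p) : ℤ) - (η (x + p) : ℤ)).natAbs) < 2 ^ (x + p)

/-- Strict ordering of generators: `ξ ≺ η` (with truncated subtraction). -/
def genLt (ξ η : ℕ → ℕ) : Prop :=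
  ∃ k x : ℕ, ∀ p : ℕ, 2 ^ k * (η (x + p) - ξ (x + p)) ≥ 2 ^ (x + p)

/-- Pointwise addition of generators. -/
def genAdd (ξ η : ℕ → ℕ) : ℕ → ℕ := fun x => ξ x + η x

/-- Multiplication of generators: `(ξ·η)(x) = ⌊ξ(x)·η(x)/2^x⌋`. -/
def genMul (ξ η : ℕ → ℕ) : ℕ → ℕ := fun x => ξ x * η x / 2 ^ x

/-- The generator corresponding to the natural number `n`. -/
def fgen (n : ℕ) : ℕ → ℕ := fun l => n * 2 ^ l

lemma isGen_abs {ξ : ℕ → ℕ} {k x : ℕ}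
    (h : ∀ p : ℕ, 2 ^ k * ((2 ^ p * (ξ x : ℤ) - (ξ (x + p) : ℤ)).natAbs) < 2 ^ (x + p))
    (p : ℕ) : (2 ^ k : ℤ) * |2 ^ p * (ξ x : ℤ) - (ξ (x + p) : ℤ)| < 2 ^ (x + p) := by
  have := h p
  zify [Int.natCast_natAbs] at this
  simpa using this

lemma gen_bound {ξ : ℕ → ℕ} (hξ : IsGen ξ) :
    ∃ B : ℕ, ∀ x : ℕ, (ξ x : ℤ) ≤ 2 ^ B * 2 ^ x := by
  obtain ⟨x₀, h⟩ := hξ 0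
  set B := (Finset.range (x₀ + 1)).sum ξ + 1 with hBdef
  refine ⟨B, fun x => ?_⟩
  have hB2 : (B : ℤ) ≤ 2 ^ B := by exact_mod_cast (Nat.lt_two_pow_self (n := B)).le
  have hx0le : ξ x₀ + 1 ≤ B := by
    have : ξ x₀ ≤ (Finset.range (x₀ + 1)).sum ξ :=
      Finset.single_le_sum (fun i _ => Nat.zero_le _) (Finset.mem_range.mpr (by omega))
    omega
  rcases le_or_gt x x₀ with hx | hx
  · have h1 : ξ x ≤ (Finset.range (x₀ + 1)).sum ξ :=
      Finset.single_le_sum (fun i _ => Nat.zero_le _) (Finset.mem_range.mpr (by omega))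
    have : (ξ x : ℤ) ≤ B := by exact_mod_cast by omega
    have h2 : (1 : ℤ) ≤ 2 ^ x := one_le_pow₀ (by norm_num)
    nlinarith [pow_pos (show (0:ℤ) < 2 by norm_num) B]
  · obtain ⟨p, rfl⟩ : ∃ p, x = x₀ + p := ⟨x - x₀, by omega⟩
    have ha := isGen_abs h p
    simp only [pow_zero, one_mul] at ha
    rw [abs_lt] at ha
    -- ξ (x₀+p) < 2^p * ξ x₀ + 2^(x₀+p) ≤ (B-1)*2^(x₀+p) + 2^(x₀+p) = B * 2^(x₀+p) ≤ 2^B * 2^(x₀+p)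
    have hp1 : (2:ℤ) ^ p ≤ 2 ^ (x₀ + p) := pow_le_pow_right₀ (by norm_num) (by omega)
    have hx0 : (ξ x₀ : ℤ) + 1 ≤ B := by exact_mod_cast hx0le
    have hpos : (0:ℤ) < 2 ^ (x₀ + p) := pow_pos (by norm_num) _
    have hξnn : (0:ℤ) ≤ (ξ x₀ : ℤ) := Int.natCast_nonneg _
    nlinarith

lemma gen_shift {ξ : ℕ → ℕ} (hξ : IsGen ξ) (k : ℕ) :
    ∃ x₁ : ℕ, ∀ x : ℕ, x₁ ≤ x → ∀ p : ℕ,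
      (2 ^ k : ℤ) * |2 ^ p * (ξ x : ℤ) - (ξ (x + p) : ℤ)| < 2 ^ (x + p) := by
  obtain ⟨x₁, h⟩ := hξ (k + 1)
  refine ⟨x₁, fun x hx p => ?_⟩
  obtain ⟨q, rfl⟩ : ∃ q, x = x₁ + q := ⟨x - x₁, by omega⟩
  have h1 := isGen_abs h q
  have h2 := isGen_abs h (q + p)
  rw [show x₁ + (q + p) = x₁ + q + p by omega] at h2
  have key : |2 ^ p * (ξ (x₁ + q) : ℤ) - (ξ (x₁ + q + p) : ℤ)| ≤
      2 ^ p * |2 ^ q * (ξ x₁ : ℤ) - (ξ (x₁ + q) : ℤ)| +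
      |2 ^ (q + p) * (ξ x₁ : ℤ) - (ξ (x₁ + q + p) : ℤ)| := by
    have hid : 2 ^ p * (ξ (x₁ + q) : ℤ) - (ξ (x₁ + q + p) : ℤ) =
        (-(2 ^ p)) * (2 ^ q * (ξ x₁ : ℤ) - (ξ (x₁ + q) : ℤ)) +
        (2 ^ (q + p) * (ξ x₁ : ℤ) - (ξ (x₁ + q + p) : ℤ)) := by
      rw [pow_add]; ring
    rw [hid]
    calc |_ + _| ≤ |(-(2 ^ p)) * (2 ^ q * (ξ x₁ : ℤ) - (ξ (x₁ + q) : ℤ))| +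
        |2 ^ (q + p) * (ξ x₁ : ℤ) - (ξ (x₁ + q + p) : ℤ)| := abs_add_le _ _
      _ = 2 ^ p * |2 ^ q * (ξ x₁ : ℤ) - (ξ (x₁ + q) : ℤ)| +
        |2 ^ (q + p) * (ξ x₁ : ℤ) - (ξ (x₁ + q + p) : ℤ)| := by
          rw [abs_mul, abs_neg, abs_pow]; norm_num
  have hppos : (0:ℤ) < 2 ^ p := pow_pos (by norm_num) _
  have hm := mul_lt_mul_of_pos_left h1 hppos
  have e1 : (2:ℤ) ^ (k + 1) = 2 * 2 ^ k := by rw [pow_add]; ring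
  have e2 : (2:ℤ) ^ p * 2 ^ (x₁ + q) = 2 ^ (x₁ + q + p) := by rw [pow_add]; ring
  have hk1 := mul_le_mul_of_nonneg_left key
    (le_of_lt (pow_pos (show (0:ℤ) < 2 by norm_num) (k + 1)))
  have hm' : (2:ℤ) ^ (k + 1) * (2 ^ p * |2 ^ q * (ξ x₁ : ℤ) - (ξ (x₁ + q) : ℤ)|) <
      2 ^ (x₁ + q + p) := by rw [mul_left_comm, ← e2]; exact hm
  have hmul : (2:ℤ) ^ (k + 1) * (2 ^ p * |2 ^ q * (ξ x₁ : ℤ) - (ξ (x₁ + q) : ℤ)| +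
      |2 ^ (q + p) * (ξ x₁ : ℤ) - (ξ (x₁ + q + p) : ℤ)|) =
      2 ^ (k + 1) * (2 ^ p * |2 ^ q * (ξ x₁ : ℤ) - (ξ (x₁ + q) : ℤ)|) +
      2 ^ (k + 1) * |2 ^ (q + p) * (ξ x₁ : ℤ) - (ξ (x₁ + q + p) : ℤ)| := mul_add _ _ _
  have he : (2:ℤ) ^ (k + 1) * |2 ^ p * (ξ (x₁ + q) : ℤ) - (ξ (x₁ + q + p) : ℤ)| =
      2 * (2 ^ k * |2 ^ p * (ξ (x₁ + q) : ℤ) - (ξ (x₁ + q + p) : ℤ)|) := by rw [e1]; ring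
  linarith

theorem mul_isGen (ξ η : ℕ → ℕ) (hξ : IsGen ξ) (hη : IsGen η) :
    IsGen (genMul ξ η) := by
  obtain ⟨B, hB⟩ := gen_bound hξ
  obtain ⟨C, hC⟩ := gen_bound hη
  intro k
  obtain ⟨x₁, h1⟩ := gen_shift hξ (k + B + C + 2)
  obtain ⟨x₂, h2⟩ := gen_shift hη (k + B + C + 2)
  refine ⟨max (max x₁ x₂) (k + 2), fun p => ?_⟩
  set x := max (max x₁ x₂) (k + 2) with hxdef
  have hx2 : k + 2 ≤ x := le_max_right _ _
  have ha := h1 x (le_trans (le_max_left _ _) (le_max_left _ _)) p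
  have hb := h2 x (le_trans (le_max_right _ _) (le_max_left _ _)) p
  -- abbreviations
  set a : ℤ := 2 ^ p * (ξ x : ℤ) - (ξ (x + p) : ℤ) with hadef
  set b : ℤ := 2 ^ p * (η x : ℤ) - (η (x + p) : ℤ) with hbdef
  set T : ℤ := 2 ^ (x + p) with hTdef
  -- division with remainder
  have hdm1 : (ξ x : ℤ) * (η x : ℤ) =
      2 ^ x * (genMul ξ η x : ℤ) + ((ξ x * η x % 2 ^ x : ℕ) : ℤ) := by
    have := Nat.div_add_mod (ξ x * η x) (2 ^ x)
    simp only [genMul]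
    exact_mod_cast this.symm
  have hdm2 : (ξ (x + p) : ℤ) * (η (x + p) : ℤ) =
      2 ^ (x + p) * (genMul ξ η (x + p) : ℤ) + ((ξ (x + p) * η (x + p) % 2 ^ (x + p) : ℕ) : ℤ) := by
    have := Nat.div_add_mod (ξ (x + p) * η (x + p)) (2 ^ (x + p))
    simp only [genMul]
    exact_mod_cast this.symm
  set rx : ℤ := ((ξ x * η x % 2 ^ x : ℕ) : ℤ) with hrxdef
  set rxp : ℤ := ((ξ (x + p) * η (x + p) % 2 ^ (x + p) : ℕ) : ℤ) with hrxpdef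
  have hrx0 : 0 ≤ rx := Int.natCast_nonneg _
  have hrxp0 : 0 ≤ rxp := Int.natCast_nonneg _
  have hrx1 : rx < 2 ^ x := by
    rw [hrxdef]
    exact_mod_cast Nat.mod_lt _ (Nat.pow_pos (by norm_num) : 0 < 2 ^ x)
  have hrxp1 : rxp < T := by
    rw [hrxpdef, hTdef]
    exact_mod_cast Nat.mod_lt _ (Nat.pow_pos (by norm_num) : 0 < 2 ^ (x + p))
  -- key identity
  have hD : T * (2 ^ p * (genMul ξ η x : ℤ) - (genMul ξ η (x + p) : ℤ)) =
      2 ^ p * (η x : ℤ) * a + (ξ (x + p) : ℤ) * b + rxp - 2 ^ (2 * p) * rx := by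
    rw [hadef, hbdef, hTdef]
    linear_combination hdm2 - (2 : ℤ) ^ (2 * p) * hdm1
  -- abs bound
  have hDabs : T * |2 ^ p * (genMul ξ η x : ℤ) - (genMul ξ η (x + p) : ℤ)| ≤
      2 ^ p * (η x : ℤ) * |a| + (ξ (x + p) : ℤ) * |b| + rxp + 2 ^ (2 * p) * rx := by
    have hTpos : (0:ℤ) < T := by rw [hTdef]; positivity
    have h0 : T * |2 ^ p * (genMul ξ η x : ℤ) - (genMul ξ η (x + p) : ℤ)| =
        |T * (2 ^ p * (genMul ξ η x : ℤ) - (genMul ξ η (x + p) : ℤ))| := by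
      rw [abs_mul, abs_of_pos hTpos]
    rw [h0, hD]
    have p1 : (0:ℤ) ≤ 2 ^ p * (η x : ℤ) := by positivity
    have p2 : (0:ℤ) ≤ (ξ (x + p) : ℤ) := Int.natCast_nonneg _
    have ha1 := mul_le_mul_of_nonneg_left (le_abs_self a) p1
    have ha2 := mul_le_mul_of_nonneg_left (neg_abs_le a) p1
    have hb1 := mul_le_mul_of_nonneg_left (le_abs_self b) p2
    have hb2 := mul_le_mul_of_nonneg_left (neg_abs_le b) p2
    have hq : (0:ℤ) ≤ 2 ^ (2 * p) * rx := by positivity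
    rw [abs_le]
    constructor <;> linarith
  -- the four bounds
  have hηx : (η x : ℤ) ≤ 2 ^ C * 2 ^ x := hC x
  have hξxp : (ξ (x + p) : ℤ) ≤ 2 ^ B * 2 ^ (x + p) := hB (x + p)
  have pa : (0:ℤ) ≤ |a| := abs_nonneg _
  have pb : (0:ℤ) ≤ |b| := abs_nonneg _
  have hTpos : (0:ℤ) < T := by rw [hTdef]; positivity
  have A1 : (4:ℤ) * (2 ^ k * (2 ^ p * (η x : ℤ) * |a|)) ≤ T * T := by
    calc (4:ℤ) * (2 ^ k * (2 ^ p * (η x : ℤ) * |a|))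
        ≤ (4:ℤ) * (2 ^ k * (2 ^ p * (2 ^ C * 2 ^ x) * |a|)) := by gcongr
      _ = 2 ^ (x + p) * (2 ^ (k + C + 2) * |a|) := by ring
      _ ≤ 2 ^ (x + p) * (2 ^ (k + B + C + 2) * |a|) := by
          refine mul_le_mul_of_nonneg_left (mul_le_mul_of_nonneg_right
            (pow_le_pow_right₀ (by norm_num) (by omega)) pa) (by positivity)
      _ ≤ 2 ^ (x + p) * 2 ^ (x + p) := by
          rw [hTdef] at ha
          exact mul_le_mul_of_nonneg_left ha.le (by positivity)
  have A2 : (4:ℤ) * (2 ^ k * ((ξ (x + p) : ℤ) * |b|)) ≤ T * T := by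
    calc (4:ℤ) * (2 ^ k * ((ξ (x + p) : ℤ) * |b|))
        ≤ (4:ℤ) * (2 ^ k * ((2 ^ B * 2 ^ (x + p)) * |b|)) := by gcongr
      _ = 2 ^ (x + p) * (2 ^ (k + B + 2) * |b|) := by ring
      _ ≤ 2 ^ (x + p) * (2 ^ (k + B + C + 2) * |b|) := by
          refine mul_le_mul_of_nonneg_left (mul_le_mul_of_nonneg_right
            (pow_le_pow_right₀ (by norm_num) (by omega)) pb) (by positivity)
      _ ≤ 2 ^ (x + p) * 2 ^ (x + p) := by
          rw [hTdef] at hb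
          exact mul_le_mul_of_nonneg_left hb.le (by positivity)
  have A3 : (4:ℤ) * (2 ^ k * (2 ^ (2 * p) * rx)) ≤ T * T := by
    calc (4:ℤ) * (2 ^ k * (2 ^ (2 * p) * rx))
        ≤ (4:ℤ) * (2 ^ k * (2 ^ (2 * p) * 2 ^ x)) := by gcongr
      _ = 2 ^ (k + 2) * (2 ^ x * 2 ^ (2 * p)) := by ring
      _ ≤ 2 ^ x * (2 ^ x * 2 ^ (2 * p)) := by
          refine mul_le_mul_of_nonneg_right
            (pow_le_pow_right₀ (by norm_num) hx2) (by positivity)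
      _ = T * T := by rw [hTdef]; ring
  have A4 : (4:ℤ) * (2 ^ k * rxp) < T * T := by
    have e1 : (4:ℤ) * (2 ^ k * rxp) = 2 ^ (k + 2) * rxp := by ring
    have e2 : (2:ℤ) ^ (k + 2) ≤ T := by
      rw [hTdef]
      exact pow_le_pow_right₀ (by norm_num) (by omega)
    calc (4:ℤ) * (2 ^ k * rxp) = 2 ^ (k + 2) * rxp := e1
      _ ≤ T * rxp := mul_le_mul_of_nonneg_right e2 hrxp0
      _ < T * T := mul_lt_mul_of_pos_left hrxp1 hTpos
  -- combine
  have hsum : (2:ℤ) ^ k *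
      (2 ^ p * (η x : ℤ) * |a| + (ξ (x + p) : ℤ) * |b| + rxp + 2 ^ (2 * p) * rx) < T * T := by
    have hdist : (4:ℤ) * (2 ^ k *
        (2 ^ p * (η x : ℤ) * |a| + (ξ (x + p) : ℤ) * |b| + rxp + 2 ^ (2 * p) * rx)) =
        4 * (2 ^ k * (2 ^ p * (η x : ℤ) * |a|)) + 4 * (2 ^ k * ((ξ (x + p) : ℤ) * |b|)) +
        4 * (2 ^ k * rxp) + 4 * (2 ^ k * (2 ^ (2 * p) * rx)) := by ring
    linarith
  have hfin : T * ((2:ℤ) ^ k * |2 ^ p * (genMul ξ η x : ℤ) - (genMul ξ η (x + p) : ℤ)|) < T * T := by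
    have := mul_le_mul_of_nonneg_left hDabs (show (0:ℤ) ≤ 2 ^ k by positivity)
    calc T * ((2:ℤ) ^ k * |2 ^ p * (genMul ξ η x : ℤ) - (genMul ξ η (x + p) : ℤ)|)
        = 2 ^ k * (T * |2 ^ p * (genMul ξ η x : ℤ) - (genMul ξ η (x + p) : ℤ)|) := by ring
      _ ≤ 2 ^ k * (2 ^ p * (η x : ℤ) * |a| + (ξ (x + p) : ℤ) * |b| + rxp + 2 ^ (2 * p) * rx) := this
      _ < T * T := hsum
  have hgoal : (2:ℤ) ^ k * |2 ^ p * (genMul ξ η x : ℤ) - (genMul ξ η (x + p) : ℤ)| < T :=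
    lt_of_mul_lt_mul_left hfin hTpos.le
  rw [hTdef] at hgoal
  zify [Int.natCast_natAbs]
  convert hgoal using 2
end

section
/- Equality of generators is a congruence with respect to multiplication: if ξ, ξ', η, η' are real-number generators with ξ ≐ ξ' and η ≐ η', then ξ·η ≐ ξ'·η'. -/
/-- Every generator is bounded by `B * 2^n`. -/
lemma exists_bound (ξ : ℕ → ℕ) (hξ : IsGen ξ) :
    ∃ B : ℕ, 0 < B ∧ ∀ n : ℕ, ξ n ≤ B * 2 ^ n := by
  obtain ⟨x, hx⟩ := hξ 0
  refine ⟨(Finset.range x).sup ξ + ξ x + 2 ^ x, by positivity, fun n => ?_⟩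
  rcases lt_or_ge n x with hn | hn
  · have h1 : ξ n ≤ (Finset.range x).sup ξ := Finset.le_sup (Finset.mem_range.2 hn)
    have h2 : (1:ℕ) ≤ 2 ^ n := Nat.one_le_two_pow
    calc ξ n ≤ (Finset.range x).sup ξ := h1
      _ ≤ ((Finset.range x).sup ξ + ξ x + 2 ^ x) * 1 := by rw [Nat.mul_one]; exact le_trans (Nat.le_add_right _ _) (Nat.le_add_right _ _)
      _ ≤ ((Finset.range x).sup ξ + ξ x + 2 ^ x) * 2 ^ n :=
          Nat.mul_le_mul_left _ h2
  · obtain ⟨p, rfl⟩ := Nat.exists_eq_add_of_le hn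
    have h := hx p
    simp only [pow_zero, one_mul] at h
    have h2 : (ξ (x + p) : ℤ) ≤ 2 ^ p * (ξ x : ℤ) + 2 ^ (x + p) := by
      have habs : |2 ^ p * (ξ x : ℤ) - (ξ (x + p) : ℤ)| < 2 ^ (x + p) := by
        rw [← Int.natCast_natAbs] at *
        exact_mod_cast h
      have := abs_lt.mp habs
      linarith [this.1]
    have h3 : (2:ℤ) ^ p ≤ 2 ^ (x + p) := by
      apply pow_le_pow_right₀ (by norm_num) (by omega)
    have h4 : (0:ℤ) ≤ (ξ x : ℤ) := Int.natCast_nonneg _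
    have h6 : (1:ℤ) ≤ 2 ^ x := by exact_mod_cast Nat.one_le_two_pow (n := x)
    have h5 : (ξ (x + p) : ℤ) ≤ 2 ^ (x + p) * ((ξ x : ℤ) + 2 ^ x) := by
      nlinarith [mul_le_mul_of_nonneg_right h3 h4, pow_pos (show (0:ℤ) < 2 by norm_num) (x + p)]
    have hfin : (ξ (x + p) : ℤ) ≤ ((((Finset.range x).sup ξ : ℕ) : ℤ) + (ξ x : ℤ) + 2 ^ x) * 2 ^ (x + p) := by
      nlinarith [Int.natCast_nonneg ((Finset.range x).sup ξ), pow_pos (show (0:ℤ) < 2 by norm_num) (x + p)]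
    exact_mod_cast hfin

/-- Floor-division difference bound. -/
lemma floor_diff (a b N : ℤ) (hN : 0 < N) :
    N * |a / N - b / N| < |a - b| + N := by
  have ha := Int.mul_ediv_add_emod a N
  have hb := Int.mul_ediv_add_emod b N
  have har : 0 ≤ a % N := Int.emod_nonneg a hN.ne'
  have har' : a % N < N := Int.emod_lt_of_pos a hN
  have hbr : 0 ≤ b % N := Int.emod_nonneg b hN.ne'
  have hbr' : b % N < N := Int.emod_lt_of_pos b hN
  have key : N * (a / N - b / N) = (a - b) + (b % N - a % N) := by linarith [ha, hb, mul_sub N (a/N) (b/N)]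
  have : N * |a / N - b / N| = |N * (a / N - b / N)| := by
    rw [abs_mul, abs_of_pos hN]
  rw [this, key]
  calc |(a - b) + (b % N - a % N)| ≤ |a - b| + |b % N - a % N| := abs_add_le _ _
    _ < |a - b| + N := by
        have : |b % N - a % N| < N := abs_lt.2 ⟨by linarith, by linarith⟩
        linarith

theorem genEq_mul_congr (ξ ξ' η η' : ℕ → ℕ)
    (hξ : IsGen ξ) (hξ' : IsGen ξ') (hη : IsGen η) (hη' : IsGen η')
    (h1 : genEq ξ ξ') (h2 : genEq η η') :
    genEq (genMul ξ η) (genMul ξ' η') := by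
  intro k
  obtain ⟨Bξ, hBξpos, hBξ⟩ := exists_bound ξ hξ
  obtain ⟨Bη', hBη'pos, hBη'⟩ := exists_bound η' hη'
  obtain ⟨x₁, hx₁⟩ := h1 (k + (Bξ + Bη') + 1)
  obtain ⟨x₂, hx₂⟩ := h2 (k + (Bξ + Bη') + 1)
  refine ⟨max (max x₁ x₂) (k + 1), fun p => ?_⟩
  set B := Bξ + Bη' with hBdef
  set K := k + B + 1 with hKdef
  set n := max (max x₁ x₂) (k + 1) + p with hndef
  have hn1 : x₁ ≤ n := le_trans (le_trans (le_max_left x₁ x₂) (le_max_left _ _)) (Nat.le_add_right _ _)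
  have hn2 : x₂ ≤ n := le_trans (le_trans (le_max_right x₁ x₂) (le_max_left _ _)) (Nat.le_add_right _ _)
  have hnk : k + 1 ≤ n := le_trans (le_max_right _ _) (Nat.le_add_right _ _)
  have hA := hx₁ (n - x₁)
  rw [show x₁ + (n - x₁) = n by omega] at hA
  have hA2 := hx₂ (n - x₂)
  rw [show x₂ + (n - x₂) = n by omega] at hA2
  -- move to ℤ
  have hdξ : (2:ℤ) ^ K * |(ξ n : ℤ) - (ξ' n : ℤ)| < 2 ^ n := by
    rw [← Int.natCast_natAbs]; exact_mod_cast hA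
  have hdη : (2:ℤ) ^ K * |(η n : ℤ) - (η' n : ℤ)| < 2 ^ n := by
    rw [← Int.natCast_natAbs]; exact_mod_cast hA2
  have hξb : (ξ n : ℤ) ≤ (Bξ : ℤ) * 2 ^ n := by exact_mod_cast hBξ n
  have hη'b : (η' n : ℤ) ≤ (Bη' : ℤ) * 2 ^ n := by exact_mod_cast hBη' n
  set a : ℤ := (ξ n : ℤ) * (η n : ℤ) with hadef
  set b : ℤ := (ξ' n : ℤ) * (η' n : ℤ) with hbdef
  have hN : (0:ℤ) < 2 ^ n := by positivity
  have key := floor_diff a b (2 ^ n) hN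
  -- bound |a - b|
  have tabs : |a - b| ≤ (ξ n : ℤ) * |(η n : ℤ) - (η' n : ℤ)| + (η' n : ℤ) * |(ξ n : ℤ) - (ξ' n : ℤ)| := by
    have e : a - b = (ξ n : ℤ) * ((η n : ℤ) - (η' n : ℤ)) + (η' n : ℤ) * ((ξ n : ℤ) - (ξ' n : ℤ)) := by
      rw [hadef, hbdef]; ring
    rw [e]
    calc |(ξ n : ℤ) * ((η n : ℤ) - η' n) + (η' n : ℤ) * ((ξ n : ℤ) - ξ' n)|
        ≤ |(ξ n : ℤ) * ((η n : ℤ) - η' n)| + |(η' n : ℤ) * ((ξ n : ℤ) - ξ' n)| := abs_add_le _ _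
      _ = (ξ n : ℤ) * |(η n : ℤ) - η' n| + (η' n : ℤ) * |(ξ n : ℤ) - ξ' n| := by
          rw [abs_mul, abs_mul, abs_of_nonneg (Int.natCast_nonneg _), abs_of_nonneg (Int.natCast_nonneg _)]
  have habd : (2:ℤ) ^ K * |a - b| ≤ (B : ℤ) * 2 ^ n * 2 ^ n := by
    have t1 : (ξ n : ℤ) * ((2:ℤ) ^ K * |(η n : ℤ) - η' n|) ≤ (ξ n : ℤ) * 2 ^ n :=
      mul_le_mul_of_nonneg_left hdη.le (Int.natCast_nonneg _)
    have t2 : (η' n : ℤ) * ((2:ℤ) ^ K * |(ξ n : ℤ) - ξ' n|) ≤ (η' n : ℤ) * 2 ^ n :=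
      mul_le_mul_of_nonneg_left hdξ.le (Int.natCast_nonneg _)
    have t3 : (ξ n : ℤ) * 2 ^ n ≤ (Bξ : ℤ) * 2 ^ n * 2 ^ n :=
      mul_le_mul_of_nonneg_right hξb hN.le
    have t4 : (η' n : ℤ) * 2 ^ n ≤ (Bη' : ℤ) * 2 ^ n * 2 ^ n :=
      mul_le_mul_of_nonneg_right hη'b hN.le
    have t5 := mul_le_mul_of_nonneg_left tabs (show (0:ℤ) ≤ 2 ^ K by positivity)
    have hBcast : (B : ℤ) = (Bξ : ℤ) + (Bη' : ℤ) := by rw [hBdef]; push_cast; ring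
    calc (2:ℤ) ^ K * |a - b|
        ≤ 2 ^ K * ((ξ n : ℤ) * |(η n : ℤ) - η' n| + (η' n : ℤ) * |(ξ n : ℤ) - ξ' n|) := t5
      _ = (ξ n : ℤ) * ((2:ℤ) ^ K * |(η n : ℤ) - η' n|) + (η' n : ℤ) * ((2:ℤ) ^ K * |(ξ n : ℤ) - ξ' n|) := by ring
      _ ≤ (ξ n : ℤ) * 2 ^ n + (η' n : ℤ) * 2 ^ n := add_le_add t1 t2
      _ ≤ (Bξ : ℤ) * 2 ^ n * 2 ^ n + (Bη' : ℤ) * 2 ^ n * 2 ^ n := add_le_add t3 t4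
      _ = (B : ℤ) * 2 ^ n * 2 ^ n := by rw [hBcast]; ring
  -- reduce the goal to ℤ
  have hcast1 : ((genMul ξ η n : ℕ) : ℤ) = a / 2 ^ n := by
    simp only [genMul, hadef]; push_cast [Int.natCast_ediv]; ring_nf
  have hcast2 : ((genMul ξ' η' n : ℕ) : ℤ) = b / 2 ^ n := by
    simp only [genMul, hbdef]; push_cast [Int.natCast_ediv]; ring_nf
  have goalZ : (2:ℤ) ^ k * |a / 2 ^ n - b / 2 ^ n| < 2 ^ n := by
    have hpos : (0:ℤ) < 2 ^ K * 2 ^ n := by positivity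
    have hB2 : (B : ℤ) ≤ 2 ^ B := by exact_mod_cast (Nat.lt_two_pow_self (n := B)).le
    have hkn : (2:ℤ) ^ k * 2 ≤ 2 ^ n := by
      calc (2:ℤ) ^ k * 2 = 2 ^ (k + 1) := by rw [pow_succ]
        _ ≤ 2 ^ n := pow_le_pow_right₀ (by norm_num) hnk
    have h2K : (2:ℤ) ^ K = 2 ^ k * 2 ^ B * 2 := by
      rw [hKdef, pow_add, pow_add, pow_one]
    refine lt_of_mul_lt_mul_left ?_ hpos.le
    calc 2 ^ K * 2 ^ n * ((2:ℤ) ^ k * |a / 2 ^ n - b / 2 ^ n|)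
        = (2 ^ k * 2 ^ K) * (2 ^ n * |a / 2 ^ n - b / 2 ^ n|) := by ring
      _ < (2 ^ k * 2 ^ K) * (|a - b| + 2 ^ n) := by
          apply mul_lt_mul_of_pos_left key (by positivity)
      _ = 2 ^ k * (2 ^ K * |a - b|) + (2 ^ k * 2 ^ K) * 2 ^ n := by ring
      _ ≤ 2 ^ k * ((B : ℤ) * 2 ^ n * 2 ^ n) + (2 ^ k * 2 ^ K) * 2 ^ n := by
          have := mul_le_mul_of_nonneg_left habd (show (0:ℤ) ≤ 2 ^ k by positivity)
          linarith
      _ ≤ 2 ^ K * 2 ^ n * 2 ^ n := by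
          nlinarith [mul_le_mul_of_nonneg_right hB2 (show (0:ℤ) ≤ 2 ^ k * (2 ^ n * 2 ^ n) by positivity),
            mul_le_mul_of_nonneg_right hkn (show (0:ℤ) ≤ 2 ^ k * 2 ^ B * 2 ^ n by positivity),
            h2K]
  rw [← Nat.cast_lt (α := ℤ)]
  push_cast [Int.natCast_natAbs]
  rw [hcast1, hcast2]
  exact goalZ
end

section
/- For real-number generators f and g, generator equality is characterized by the order relation: f ≐ g if and only if ¬(g ≺ f ∨ f ≺ g). -/
/-- Stability: the Cauchy bound anchored at `a` yields a (slightly weaker)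
Cauchy bound anchored at any `n ≥ a`. -/
lemma gen_stab {ξ : ℕ → ℕ} {K a : ℕ}
    (h : ∀ p, 2 ^ (K + 1) * ((2 ^ p * (ξ a : ℤ) - (ξ (a + p) : ℤ)).natAbs) < 2 ^ (a + p)) :
    ∀ n q, a ≤ n →
      2 ^ K * ((2 ^ q * (ξ n : ℤ) - (ξ (n + q) : ℤ)).natAbs) < 2 ^ (n + q) := by
  intro n q han
  obtain ⟨p1, rfl⟩ := Nat.exists_eq_add_of_le han
  have h1 := h p1
  have h2 := h (p1 + q)
  rw [← Nat.add_assoc] at h2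
  set z1 : ℤ := 2 ^ p1 * (ξ a : ℤ) - (ξ (a + p1) : ℤ) with hz1
  set z2 : ℤ := 2 ^ (p1 + q) * (ξ a : ℤ) - (ξ (a + p1 + q) : ℤ) with hz2
  have hzeq : 2 ^ q * (ξ (a + p1) : ℤ) - (ξ (a + p1 + q) : ℤ) = z2 - 2 ^ q * z1 := by
    rw [hz1, hz2, pow_add]; ring
  rw [hzeq]
  have htri : (z2 - 2 ^ q * z1).natAbs ≤ z2.natAbs + 2 ^ q * z1.natAbs := by
    have := Int.natAbs_sub_le z2 (2 ^ q * z1)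
    rwa [Int.natAbs_mul, Int.natAbs_pow] at this
  have hpow1 : 2 ^ (a + p1 + q) = 2 ^ q * 2 ^ (a + p1) := by
    rw [← pow_add]; ring_nf
  have hKK : (2 : ℕ) ^ (K + 1) = 2 * 2 ^ K := by rw [pow_succ]; ring
  -- combine
  have hb : 2 ^ (K + 1) * (z2.natAbs + 2 ^ q * z1.natAbs) < 2 * 2 ^ (a + p1 + q) := by
    have h1' : 2 ^ q * (2 ^ (K + 1) * z1.natAbs) < 2 ^ q * 2 ^ (a + p1) :=
      mul_lt_mul_of_pos_left h1 (by positivity)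
    calc 2 ^ (K + 1) * (z2.natAbs + 2 ^ q * z1.natAbs)
        = 2 ^ (K + 1) * z2.natAbs + 2 ^ q * (2 ^ (K + 1) * z1.natAbs) := by ring
      _ < 2 ^ (a + p1 + q) + 2 ^ q * 2 ^ (a + p1) := by
          exact Nat.add_lt_add h2 h1'
      _ = 2 * 2 ^ (a + p1 + q) := by rw [hpow1]; ring
  have hfin : 2 ^ (K + 1) * (z2 - 2 ^ q * z1).natAbs < 2 * 2 ^ (a + p1 + q) :=
    lt_of_le_of_lt (Nat.mul_le_mul_left _ htri) hb
  rw [hKK, Nat.mul_assoc] at hfin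
  omega

/-- Convert a `natAbs` bound into two integer bounds. -/
lemma abs_bound {K m : ℕ} {z : ℤ} (h : 2 ^ K * z.natAbs < 2 ^ m) :
    (2 : ℤ) ^ K * z < 2 ^ m ∧ -(2 ^ m) < (2 : ℤ) ^ K * z := by
  have h' : (2 : ℤ) ^ K * (z.natAbs : ℤ) < 2 ^ m := by exact_mod_cast h
  have hz : z ≤ (z.natAbs : ℤ) := Int.le_natAbs
  have hz' : -z ≤ (z.natAbs : ℤ) := by
    rw [← Int.natAbs_neg z]; exact Int.le_natAbs
  have hK : (0 : ℤ) < 2 ^ K := by positivity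
  constructor
  · calc (2 : ℤ) ^ K * z ≤ 2 ^ K * (z.natAbs : ℤ) := by
          exact mul_le_mul_of_nonneg_left hz (le_of_lt hK)
      _ < 2 ^ m := h'
  · have : (2 : ℤ) ^ K * (-z) ≤ 2 ^ K * (z.natAbs : ℤ) :=
      mul_le_mul_of_nonneg_left hz' (le_of_lt hK)
    nlinarith

/-- Key half of the hard direction: a definite gap `g n < f n` at a point `n`
past both Cauchy anchors forces `g ≺ f`. -/
lemma gap_to_lt (f g : ℕ → ℕ) (k a b n : ℕ)
    (ha : ∀ p, 2 ^ (k + 3) * ((2 ^ p * (f a : ℤ) - (f (a + p) : ℤ)).natAbs) < 2 ^ (a + p))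
    (hb : ∀ p, 2 ^ (k + 3) * ((2 ^ p * (g b : ℤ) - (g (b + p) : ℤ)).natAbs) < 2 ^ (b + p))
    (han : a ≤ n) (hbn : b ≤ n)
    (hC : 2 ^ n ≤ 2 ^ k * ((f n : ℤ) - (g n : ℤ)).natAbs)
    (hfg : g n ≤ f n) : genLt g f := by
  refine ⟨k + 2, n, ?_⟩
  intro p
  have hsf := gen_stab (K := k + 2) ha n p han
  have hsg := gen_stab (K := k + 2) hb n p hbn
  obtain ⟨hF1, hF2⟩ := abs_bound hsf
  obtain ⟨hG1, hG2⟩ := abs_bound hsg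
  -- integer version of hC
  have hCabs : ((f n : ℤ) - (g n : ℤ)).natAbs = f n - g n := by omega
  rw [hCabs] at hC
  have hCZ : (2 : ℤ) ^ n ≤ 2 ^ k * ((f n : ℤ) - (g n : ℤ)) := by
    have : ((2 : ℕ) ^ n : ℤ) ≤ ((2 ^ k * (f n - g n) : ℕ) : ℤ) := by exact_mod_cast hC
    push_cast [hfg] at this
    convert this using 1
  -- key multiplied inequality
  have key : 4 * (2 : ℤ) ^ n * 2 ^ p ≤ 2 ^ (k + 2) * 2 ^ p * ((f n : ℤ) - (g n : ℤ)) := by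
    have h4 : (0 : ℤ) ≤ 4 * 2 ^ p := by positivity
    have := mul_le_mul_of_nonneg_left hCZ h4
    have hkk : (2 : ℤ) ^ (k + 2) = 4 * 2 ^ k := by ring
    rw [hkk]
    linarith
  have hnp : (2 : ℤ) ^ (n + p) = 2 ^ n * 2 ^ p := pow_add 2 n p
  -- final integer inequality
  have hZ : (2 : ℤ) ^ (n + p) ≤ 2 ^ (k + 2) * ((f (n + p) : ℤ) - (g (n + p) : ℤ)) := by
    linarith [hF1, hG2, key, hnp]
  -- back to ℕ
  have hle : g (n + p) ≤ f (n + p) := by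
    by_contra hcon
    push_neg at hcon
    have : ((f (n + p) : ℤ) - (g (n + p) : ℤ)) < 0 := by
      have : (f (n + p) : ℤ) < (g (n + p) : ℤ) := by exact_mod_cast hcon
      linarith
    nlinarith [pow_pos (show (0:ℤ) < 2 from by norm_num) (n + p),
      pow_pos (show (0:ℤ) < 2 from by norm_num) (k + 2)]
  have : ((2 : ℕ) ^ (n + p) : ℤ) ≤ ((2 ^ (k + 2) * (f (n + p) - g (n + p)) : ℕ) : ℤ) := by
    push_cast [hle]
    convert hZ using 1
  exact_mod_cast this

theorem genEq_iff_not_lt (f g : ℕ → ℕ) (hf : IsGen f) (hg : IsGen g) :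
    genEq f g ↔ ¬(genLt g f ∨ genLt f g) := by
  constructor
  · intro heq h
    rcases h with ⟨k, x, hp⟩ | ⟨k, x, hp⟩
    · obtain ⟨x', hq⟩ := heq k
      set n := max x x' with hn
      have h1 := hp (n - x)
      have h2 := hq (n - x')
      rw [Nat.add_sub_cancel' (le_max_left x x')] at h1
      rw [Nat.add_sub_cancel' (le_max_right x x')] at h2
      have habs : f n - g n ≤ ((f n : ℤ) - (g n : ℤ)).natAbs := by omega
      have : (2 : ℕ) ^ n ≤ 2 ^ k * (((f n : ℤ) - (g n : ℤ)).natAbs) :=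
        le_trans h1 (Nat.mul_le_mul_left _ habs)
      exact lt_irrefl _ (lt_of_lt_of_le h2 this)
    · obtain ⟨x', hq⟩ := heq k
      set n := max x x' with hn
      have h1 := hp (n - x)
      have h2 := hq (n - x')
      rw [Nat.add_sub_cancel' (le_max_left x x')] at h1
      rw [Nat.add_sub_cancel' (le_max_right x x')] at h2
      have habs : g n - f n ≤ ((f n : ℤ) - (g n : ℤ)).natAbs := by omega
      have : (2 : ℕ) ^ n ≤ 2 ^ k * (((f n : ℤ) - (g n : ℤ)).natAbs) :=
        le_trans h1 (Nat.mul_le_mul_left _ habs)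
      exact lt_irrefl _ (lt_of_lt_of_le h2 this)
  · intro hnl
    by_contra hne
    unfold genEq at hne
    push_neg at hne
    obtain ⟨k, hk⟩ := hne
    obtain ⟨a, ha⟩ := hf (k + 3)
    obtain ⟨b, hb⟩ := hg (k + 3)
    obtain ⟨p, hp⟩ := hk (max a b)
    set n := max a b + p with hn
    have han : a ≤ n := le_trans (le_max_left a b) (Nat.le_add_right _ _)
    have hbn : b ≤ n := le_trans (le_max_right a b) (Nat.le_add_right _ _)
    by_cases hfg : g n ≤ f n
    · exact hnl (Or.inl (gap_to_lt f g k a b n ha hb han hbn hp hfg))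
    · push_neg at hfg
      have hp' : 2 ^ n ≤ 2 ^ k * ((g n : ℤ) - (f n : ℤ)).natAbs := by
        have e : ((g n : ℤ) - (f n : ℤ)).natAbs = ((f n : ℤ) - (g n : ℤ)).natAbs := by omega
        rwa [e]
      exact hnl (Or.inr (gap_to_lt g f k b a n hb ha hbn han hp' (le_of_lt hfg)))
end
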